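/- arXiv:2111.11409 — 2 statements merged into one kernel-verified Lean document; each statement's English description precedes it below -/
import Mathlib

section
/- Let U, U', W, W' be varieties over a field k and let W → W', W → U, f : W' → U', φ : U → U' form a Cartesian square (W = U ×_{U'} W') with φ smooth. Let S be a subset of U', and for each u ∈ S let L_u be a finite field extension of the residue field κ(u), such that: (i) the fiber of φ at every point u ∉ S is split; (ii) for each u ∈ S, the base change φ⁻¹(u) ×_{κ(u)} L_u is a split L_u-scheme; and (iii) for every w ∈ W' with f(w) ∈ S, there exists an embedding of κ(f(w))-extensions L_{f(w)} ↪ κ(w). Then the projection W → W' is smooth with split fibers. -/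
/-!
Common definitions used to formalize the paper
"Weak weak approximation for del Pezzo surfaces of low degree" (arXiv:2111.11409).
-/

open AlgebraicGeometry CategoryTheory CategoryTheory.Limits TopologicalSpace

noncomputable section

namespace Paper

/-- `Spec` of a plain commutative ring. -/
abbrev SpecF (R : Type) [CommRing R] : Scheme := Spec (CommRingCat.of R)

attribute [local instance] MvPolynomial.gradedAlgebra

/-- Projective `n`-space over `k`, as `Proj k[x₀, …, xₙ]`. -/
abbrev ProjSpace (k : Type) [CommRing k] (n : ℕ) : Scheme :=
  Proj (MvPolynomial.homogeneousSubmodule (Fin (n + 1)) k)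

/-- The projective line over `k`. -/
abbrev P1 (k : Type) [CommRing k] : Scheme := ProjSpace k 1

/-- The structure morphism `ℙⁿ_k ⟶ Spec k`. -/
def ProjSpace.structMor (k : Type) [CommRing k] (n : ℕ) : ProjSpace k n ⟶ SpecF k :=
  Proj.toSpecZero _ ≫ Spec.map (CommRingCat.ofHom (algebraMap k _))

/-- The scheme-theoretic fiber of a morphism `f : X ⟶ Y` over a point `y : Y`,
i.e. the pullback of `f` along the canonical `Spec κ(y) ⟶ Y`. -/
def fiberAt {X Y : Scheme} (f : X ⟶ Y) (y : Y) : Scheme :=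
  pullback f (Y.fromSpecResidueField y)

/-- The structure morphism of the fiber, to `Spec κ(y)`. -/
def fiberStruct {X Y : Scheme} (f : X ⟶ Y) (y : Y) :
    fiberAt f y ⟶ SpecF (Y.residueField y) :=
  pullback.snd _ _

/-- The inclusion of the fiber in the total space. -/
def fiberIncl {X Y : Scheme} (f : X ⟶ Y) (y : Y) : fiberAt f y ⟶ X :=
  pullback.fst _ _

/-- A scheme `X` over a field `k` is geometrically integral if it stays integral
after arbitrary field extensions of `k`. -/
def GeometricallyIntegral (k : Type) [Field k] (X : Scheme) (p : X ⟶ SpecF k) : Prop :=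
  ∀ (F : Type) (_ : Field F) (i : k →+* F),
    IsIntegral (pullback p (Spec.map (CommRingCat.ofHom i)))

/-- A scheme over a field `k` is *split* if it contains a nonempty geometrically
integral open subscheme. -/
def SplitOver (k : Type) [Field k] (X : Scheme) (p : X ⟶ SpecF k) : Prop :=
  ∃ U : X.Opens, (U : Set X).Nonempty ∧ GeometricallyIntegral k U.toScheme (U.ι ≫ p)

/-- A variety over `k`: a geometrically integral separated scheme of finite type
over `k`. -/
def IsVarietyOver (k : Type) [Field k] (X : Scheme) (p : X ⟶ SpecF k) : Prop :=
  LocallyOfFiniteType p ∧ QuasiCompact p ∧ IsSeparated p ∧ GeometricallyIntegral k X p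

/-- `X` is projective over `k`: it admits a closed immersion into some `ℙⁿ_k` over `k`. -/
def IsProjectiveOver (k : Type) [Field k] (X : Scheme) (p : X ⟶ SpecF k) : Prop :=
  ∃ (n : ℕ) (ι : X ⟶ ProjSpace k n), IsClosedImmersion ι ∧ ι ≫ ProjSpace.structMor k n = p

/-- A smooth projective surface (smooth projective variety of dimension 2) over `k`. -/
def IsSmoothProjSurfaceOver (k : Type) [Field k] (X : Scheme) (p : X ⟶ SpecF k) : Prop :=
  IsSmooth p ∧ IsProjectiveOver k X p ∧ IsVarietyOver k X p ∧
    topologicalKrullDim X = 2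

/-- A presentation of the graded quotient `k[xᵢ ; i ∈ σ]/I` (with weights `w`), given by
an abstract graded algebra `B` together with a graded surjection from the weighted
polynomial ring with kernel `I`.  `Proj` of such a presentation is the closed subscheme
of the weighted projective space `ℙ(w)` cut out by `I`. -/
structure GradedQuotientPresentation (k : Type) [CommRing k] (σ : Type) (w : σ → ℕ)
    (I : Ideal (MvPolynomial σ k)) where
  B : Type
  [commRing : CommRing B]
  [alg : Algebra k B]
  grading : ℕ → Submodule k B
  [gradedAlgebra : GradedAlgebra grading]
  proj : MvPolynomial σ k →ₐ[k] B
  surj : Function.Surjective proj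
  ker_eq : RingHom.ker proj.toRingHom = I
  maps_grading : ∀ (n : ℕ) (x : MvPolynomial σ k),
    x ∈ MvPolynomial.weightedHomogeneousSubmodule k w n → proj x ∈ grading n

attribute [instance] GradedQuotientPresentation.commRing GradedQuotientPresentation.alg
  GradedQuotientPresentation.gradedAlgebra

/-- The scheme `Proj (k[xᵢ]/I)` attached to a graded quotient presentation. -/
def GradedQuotientPresentation.scheme {k : Type} [CommRing k] {σ : Type} {w : σ → ℕ}
    {I : Ideal (MvPolynomial σ k)} (P : GradedQuotientPresentation k σ w I) : Scheme :=
  Proj P.grading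

/-- The structure morphism `Proj (k[xᵢ]/I) ⟶ Spec k`. -/
def GradedQuotientPresentation.structMor {k : Type} [CommRing k] {σ : Type} {w : σ → ℕ}
    {I : Ideal (MvPolynomial σ k)} (P : GradedQuotientPresentation k σ w I) :
    P.scheme ⟶ SpecF k :=
  Proj.toSpecZero P.grading ≫ Spec.map (CommRingCat.ofHom (algebraMap k _))

/-- `X` (over `k`) is isomorphic, as a `k`-scheme, to the closed subscheme of the
weighted projective space `ℙ(w)` cut out by the ideal `I`. -/
def IsProjQuotientOver (k : Type) [Field k] {σ : Type} (w : σ → ℕ)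
    (I : Ideal (MvPolynomial σ k)) (X : Scheme) (p : X ⟶ SpecF k) : Prop :=
  ∃ (P : GradedQuotientPresentation k σ w I) (e : X ≅ P.scheme),
    e.hom ≫ P.structMor = p

/-- A scheme `C` over a field `F` is a *plane conic* if it is isomorphic over `F` to the
vanishing scheme in `ℙ²_F` of a nonzero homogeneous form of degree `2`. -/
def IsPlaneConicOver (F : Type) [Field F] (C : Scheme) (pC : C ⟶ SpecF F) : Prop :=
  ∃ q : MvPolynomial (Fin 3) F, q.IsHomogeneous 2 ∧ q ≠ 0 ∧
    IsProjQuotientOver F (fun _ => 1) (Ideal.span {q}) C pC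

/-- The locus of points of `X` at which `π` fails to be smooth.  For a conic fibration
this is exactly the (finite) set of singular points of the singular fibers. -/
def BadLocus {X Y : Scheme} (π : X ⟶ Y) : Set X :=
  { x | ¬ ∃ U : X.Opens, x ∈ U ∧ IsSmooth (U.ι ≫ π) }

/-- A conic fibration on `X` over `k`: a `k`-morphism `π : X ⟶ ℙ¹` all of whose
scheme-theoretic fibers are plane conics over the respective residue fields. -/
def IsConicFibration (k : Type) [Field k] {X : Scheme} (pX : X ⟶ SpecF k)
    (π : X ⟶ P1 k) : Prop :=
  π ≫ ProjSpace.structMor k 1 = pX ∧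
  ∀ y : P1 k, IsPlaneConicOver ((P1 k).residueField y) (fiberAt π y) (fiberStruct π y)

/-- Condition (a): any fiber of `π₁` meets any fiber of `π₂` in a nonempty finite set;
for curves on a projective surface this says exactly that fibers from the two fibrations
have nonzero intersection product. -/
def FibersMeetFinitely {k : Type} [CommRing k] {X : Scheme} (π₁ π₂ : X ⟶ P1 k) : Prop :=
  ∀ p q : P1 k, { x : X | π₁.base x = p ∧ π₂.base x = q }.Nonempty ∧
    { x : X | π₁.base x = p ∧ π₂.base x = q }.Finite

/-- The (rational) point `P₀` lies on a smooth fiber of `π`: the fiber of `π` through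
`P₀` contains no non-smooth point of `π`. -/
def OnSmoothFiber {k : Type} [CommRing k] {X : Scheme} (π : X ⟶ P1 k)
    (P₀ : SpecF k ⟶ X) : Prop :=
  ∀ x : X, (∃ x₀ ∈ Set.range P₀.base, π.base x = π.base x₀) → x ∉ BadLocus π

section Arithmetic

/-- The set of places of a number field `K`: finite places (height-one primes of the
ring of integers) together with the infinite places. -/
def Place (K : Type) [Field K] [NumberField K] : Type :=
  IsDedekindDomain.HeightOneSpectrum (NumberField.RingOfIntegers K) ⊕
    NumberField.InfinitePlace K

/-- The completion `K_v` of `K` at a place `v`. -/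
def Place.Completion {K : Type} [Field K] [NumberField K] : Place K → Type
  | .inl v => v.adicCompletion K
  | .inr v => v.1.Completion

instance {K : Type} [Field K] [NumberField K] (v : Place K) : Field v.Completion := by
  cases v with
  | inl v => exact inferInstanceAs (Field (v.adicCompletion K))
  | inr v => exact inferInstanceAs (Field v.1.Completion)

instance {K : Type} [Field K] [NumberField K] (v : Place K) :
    TopologicalSpace v.Completion := by
  cases v with
  | inl v => exact inferInstanceAs (TopologicalSpace (v.adicCompletion K))
  | inr v => exact inferInstanceAs (TopologicalSpace v.1.Completion)

instance {K : Type} [Field K] [NumberField K] (v : Place K) : Algebra K v.Completion := by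
  cases v with
  | inl v => exact inferInstanceAs (Algebra K (v.adicCompletion K))
  | inr v => exact inferInstanceAs (Algebra K v.1.Completion)

/-- Evaluation of a section `s ∈ Γ(X, U)` at an `A`-point of `X` landing in `U`. -/
def evalAt {A : Type} [CommRing A] {X : Scheme} (f : SpecF A ⟶ X) (U : X.Opens)
    (hU : Set.range f.base ⊆ (U : Set X)) (s : Γ(X, U)) : A :=
  (Scheme.ΓSpecIso (CommRingCat.of A)).hom
    ((IsOpenImmersion.lift U.ι f (by rwa [Scheme.Opens.range_ι])).appTop (U.topIso.inv s))

/-- The topology on the set of `A`-points of a scheme `X`, for a topological ring `A`: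
generated by the conditions "the point lies in the open `U` and the value of the regular
function `s` at it lies in the open `V ⊆ A`". -/
def pointsTopology (A : Type) [CommRing A] [TopologicalSpace A] (X : Scheme) :
    TopologicalSpace (SpecF A ⟶ X) :=
  TopologicalSpace.generateFrom
    { T | ∃ (U : X.Opens) (s : Γ(X, U)) (V : Set A), IsOpen V ∧
        T = { f | ∃ hU : Set.range f.base ⊆ (U : Set X), evalAt f U hU s ∈ V } }

variable (K : Type) [Field K] [NumberField K]

/-- The `K`-rational points of a `K`-scheme. -/
def RatPoints {X : Scheme} (p : X ⟶ SpecF K) : Type :=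
  { f : SpecF K ⟶ X // f ≫ p = 𝟙 (SpecF K) }

/-- The `K_v`-points of a `K`-scheme. -/
def LocPoints (v : Place K) {X : Scheme} (p : X ⟶ SpecF K) : Type :=
  { f : SpecF v.Completion ⟶ X //
      f ≫ p = Spec.map (CommRingCat.ofHom (algebraMap K v.Completion)) }

instance (v : Place K) {X : Scheme} (p : X ⟶ SpecF K) :
    TopologicalSpace (LocPoints K v p) :=
  TopologicalSpace.induced Subtype.val (pointsTopology v.Completion X)

/-- The diagonal map from rational points to the product of local points away from `S`. -/
def diagMap {X : Scheme} (p : X ⟶ SpecF K) (S : Finset (Place K)) :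
    RatPoints K p → ∀ v : { v : Place K // v ∉ S }, LocPoints K v.1 p :=
  fun x v =>
    ⟨Spec.map (CommRingCat.ofHom (algebraMap K (v.1).Completion)) ≫ x.1, by
      rw [Category.assoc, x.2, Category.comp_id]⟩

/-- Weak weak approximation for a scheme `X` over a number field `K`: there is a finite
set `S` of places such that `X(K)` is dense in `∏_{v ∉ S} X(K_v)`. -/
def WeakWeakApproximation {X : Scheme} (p : X ⟶ SpecF K) : Prop :=
  ∃ S : Finset (Place K), DenseRange (diagMap K p S)

/-- A `K`-morphism `f : Y ⟶ X` is arithmetically surjective if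
`f(Y(K_v)) = X(K_v)` for all but finitely many places `v` of `K`. -/
def ArithmeticallySurjective {Y X : Scheme} (f : Y ⟶ X) (p : X ⟶ SpecF K) : Prop :=
  { v : Place K |
      ¬ ∀ x : LocPoints K v p, ∃ y : LocPoints K v (f ≫ p), y.1 ≫ f = x.1 }.Finite

end Arithmetic

section Tower

variable {k : Type} [CommRing k] {X : Scheme}

/-- `π₁` for odd `n` and `π₂` for even `n`. -/
def selPi (π₁ π₂ : X ⟶ P1 k) (n : ℕ) : X ⟶ P1 k := if n % 2 = 1 then π₁ else π₂

/-- The tower of auxiliary varieties `C_n` together with the morphisms `f_n : C_n ⟶ X`: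
`C₀ = {P₀}`, and `C_n = C_{n-1} ×_{π_i ∘ f_{n-1}, ℙ¹, π_i} X` where `i = 1` if `n` is odd
and `i = 2` if `n` is even; `f_n` is the second projection. -/
def tower (π₁ π₂ : X ⟶ P1 k) (P₀ : SpecF k ⟶ X) : ℕ → Σ C : Scheme, C ⟶ X
  | 0 => ⟨SpecF k, P₀⟩
  | (n + 1) =>
    ⟨pullback ((tower π₁ π₂ P₀ n).2 ≫ selPi π₁ π₂ (n + 1)) (selPi π₁ π₂ (n + 1)),
      pullback.snd _ _⟩

/-- The auxiliary variety `C_n`. -/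
def Cn (π₁ π₂ : X ⟶ P1 k) (P₀ : SpecF k ⟶ X) (n : ℕ) : Scheme := (tower π₁ π₂ P₀ n).1

/-- The morphism `f_n : C_n ⟶ X`. -/
def fn (π₁ π₂ : X ⟶ P1 k) (P₀ : SpecF k ⟶ X) (n : ℕ) : Cn π₁ π₂ P₀ n ⟶ X :=
  (tower π₁ π₂ P₀ n).2

/-- The projection `a_n : C_n ⟶ C_{n-1}`. -/
def an (π₁ π₂ : X ⟶ P1 k) (P₀ : SpecF k ⟶ X) (n : ℕ) :
    Cn π₁ π₂ P₀ (n + 1) ⟶ Cn π₁ π₂ P₀ n :=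
  pullback.fst _ _

end Tower

/-- Two schemes over `F` are birational (over `F`) if they contain isomorphic dense open
subschemes, compatibly with the structure morphisms. -/
def BirationalOver (F : Type) [CommRing F] (A : Scheme) (pA : A ⟶ SpecF F)
    (B : Scheme) (pB : B ⟶ SpecF F) : Prop :=
  ∃ (U : A.Opens) (V : B.Opens), Dense (U : Set A) ∧ Dense (V : Set B) ∧
    ∃ e : U.toScheme ≅ V.toScheme, e.hom ≫ V.ι ≫ pB = U.ι ≫ pA

/-- `g : C' ⟶ C` is a desingularization (over `k`): a proper surjective morphism from a
scheme smooth over `k` which is an isomorphism over a dense open subscheme of `C`. -/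
def IsDesingularization (k : Type) [Field k] {C C' : Scheme} (pC : C ⟶ SpecF k)
    (g : C' ⟶ C) : Prop :=
  IsProper g ∧ Function.Surjective g.base ∧ IsSmooth (g ≫ pC) ∧
    ∃ V : C.Opens, Dense (V : Set C) ∧ IsIso (g ∣_ V)

/-- A scheme over `k` is rational if it is birational over `k` to some `ℙⁿ_k`. -/
def IsRationalOver (k : Type) [Field k] (C : Scheme) (pC : C ⟶ SpecF k) : Prop :=
  ∃ n : ℕ, BirationalOver k C pC (ProjSpace k n) (ProjSpace.structMor k n)

section PseudoSplit

/-- The morphism `Spec k̄ ⟶ Spec k`. -/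
def algClosureMor (k : Type) [Field k] : SpecF (AlgebraicClosure k) ⟶ SpecF k :=
  Spec.map (CommRingCat.ofHom (algebraMap k (AlgebraicClosure k)))

/-- The base change `X ×_k k̄` of a `k`-scheme to the algebraic closure. -/
def geomModel (k : Type) [Field k] (X : Scheme) (p : X ⟶ SpecF k) : Scheme :=
  pullback p (algClosureMor k)

/-- The projection `X ×_k k̄ ⟶ X`. -/
def geomModelProj (k : Type) [Field k] (X : Scheme) (p : X ⟶ SpecF k) :
    geomModel k X p ⟶ X :=
  pullback.fst _ _

/-- The structure morphism of `X ×_k k̄` over `k̄`. -/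
def geomModelStruct (k : Type) [Field k] (X : Scheme) (p : X ⟶ SpecF k) :
    geomModel k X p ⟶ SpecF (AlgebraicClosure k) :=
  pullback.snd _ _

/-- The action of an element of `Gal(k̄/k)` on `X ×_k k̄`. -/
def galAut (k : Type) [Field k] (X : Scheme) (p : X ⟶ SpecF k)
    (γ : AlgebraicClosure k ≃ₐ[k] AlgebraicClosure k) :
    geomModel k X p ⟶ geomModel k X p :=
  pullback.map p (algClosureMor k) p (algClosureMor k) (𝟙 X)
    (Spec.map (CommRingCat.ofHom γ.toRingHom)) (𝟙 (SpecF k))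
    (by simp)
    (by
      rw [Category.comp_id, algClosureMor, ← Spec.map_comp]
      congr 1
      ext x
      exact (γ.commutes x).symm)

/-- A multiplicity-one irreducible component of a scheme: an irreducible component whose
generic point has a stalk which is a field (i.e. the component occurs with
multiplicity one). -/
def IsMultOneComponent (Z : Scheme) (T : Set Z) : Prop :=
  T ∈ irreducibleComponents Z ∧
    ∃ ξ : Z, closure {ξ} = T ∧ IsField (Z.presheaf.stalk ξ)

/-- A scheme over a field `k` is *pseudo-split* if each element of `Gal(k̄/k)` fixes some
multiplicity-one irreducible component of `X ×_k k̄`. -/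
def PseudoSplitOver (k : Type) [Field k] (X : Scheme) (p : X ⟶ SpecF k) : Prop :=
  ∀ γ : AlgebraicClosure k ≃ₐ[k] AlgebraicClosure k,
    ∃ T : Set (geomModel k X p), IsMultOneComponent (geomModel k X p) T ∧
      (galAut k X p γ).base '' T = T

/-- `X` (over `k`) contains a pseudo-split `k`-subscheme. -/
def ContainsPseudoSplitSub (k : Type) [Field k] (X : Scheme) (p : X ⟶ SpecF k) : Prop :=
  ∃ (Z : Scheme) (ι : Z ⟶ X), IsImmersion ι ∧ PseudoSplitOver k Z (ι ≫ p)

end PseudoSplit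

section DVR

/-- The canonical ring homomorphism `k ⟶ κ(x)` for a point `x` of a `k`-scheme. -/
def kToResidue {k : Type} [CommRing k] {X : Scheme} (p : X ⟶ SpecF k) (x : X) :
    CommRingCat.of k ⟶ X.residueField x :=
  (Scheme.ΓSpecIso (CommRingCat.of k)).inv ≫ p.appTop ≫ X.evaluation ⊤ x trivial

/-- A commutative ring is a regular local ring: a Noetherian local ring whose maximal
ideal is generated by `dim` elements. -/
def IsRegularLocal (A : Type) [CommRing A] : Prop :=
  IsLocalRing A ∧ IsNoetherianRing A ∧
    ∃ s : Finset A, ((Ideal.span (s : Set A) : Ideal A) : Set A) = { a : A | ¬ IsUnit a } ∧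
      (s.card : WithBot ℕ∞) = ringKrullDim A

/-- A regular scheme: all stalks are regular local rings. -/
def RegularScheme (Z : Scheme) : Prop := ∀ z : Z, IsRegularLocal (Z.presheaf.stalk z)

/-- A normal scheme: all stalks are integrally closed domains. -/
def NormalScheme (Z : Scheme) : Prop :=
  ∀ z : Z, IsDomain (Z.presheaf.stalk z) ∧ IsIntegrallyClosed (Z.presheaf.stalk z)

variable {k : Type} [Field k] {X : Scheme}

/-- `R` is a divisorial discrete valuation ring of the function field `κ(ξ)` (where `ξ`
is the generic point of `X`) over `k`:  `k ⊆ R`, `Frac R = κ(ξ)`, and `R` arises as the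
local ring at a codimension-one point of a normal `k`-variety with function field
(isomorphic to) `κ(ξ)`. -/
def IsDivisorialDVR (p : X ⟶ SpecF k) (ξ : X) (R : Subring (X.residueField ξ)) : Prop :=
  IsGenericPoint ξ Set.univ ∧
  IsDiscreteValuationRing R ∧
  (∀ c : k, kToResidue p ξ c ∈ R) ∧
  (∀ x : X.residueField ξ, ∃ a b : R, b ≠ 0 ∧ (b : X.residueField ξ) * x = a) ∧
  ∃ (W : Scheme) (pW : W ⟶ SpecF k) (ζ : W) (η : W)
    (α : W.residueField ζ ≃+* X.residueField ξ) (h : ζ ⤳ η),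
    IsVarietyOver k W pW ∧ NormalScheme W ∧ IsGenericPoint ζ Set.univ ∧
    ringKrullDim (W.presheaf.stalk η) = 1 ∧
    α.toRingHom.comp (kToResidue pW ζ).hom = (kToResidue p ξ).hom ∧
    R = Subring.map α.toRingHom
      (RingHom.range ((W.presheaf.stalkSpecializes h ≫ W.residue ζ).hom :
        W.presheaf.stalk η →+* W.residueField ζ))

/-- `R ∈ DVR(X)`: the canonical morphism `Spec κ(ξ) ⟶ X` factors through
`c : Spec R ⟶ X`. -/
def CentersOn {ξ : X} (R : Subring (X.residueField ξ)) (c : SpecF R ⟶ X) : Prop :=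
  Spec.map (CommRingCat.ofHom R.subtype) ≫ c = X.fromSpecResidueField ξ

/-- A variety `Y` over the field `FF` has split reduction at the DVR `R ⊆ FF` (with
`Frac R = FF`): some regular integral proper `R`-scheme whose generic fiber is smooth
and birational to `Y` has split special fiber. -/
def HasSplitReductionAt {FF : Type} [Field FF] (R : Subring FF) (Y : Scheme)
    (pY : Y ⟶ SpecF FF) : Prop :=
  ∃ (𝒴 : Scheme) (q : 𝒴 ⟶ SpecF R),
    RegularScheme 𝒴 ∧ IsIntegral 𝒴 ∧ IsProper q ∧
    IsSmooth (pullback.snd q (Spec.map (CommRingCat.ofHom R.subtype))) ∧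
    BirationalOver FF (pullback q (Spec.map (CommRingCat.ofHom R.subtype)))
      (pullback.snd _ _) Y pY ∧
    ∃ (κ' : Type) (iκ : Field κ') (res : R →+* κ'),
      Function.Surjective res ∧ (RingHom.ker res).IsMaximal ∧
      @SplitOver κ' iκ (pullback q (Spec.map (CommRingCat.ofHom res)))
        (pullback.snd _ _)

/-- A morphism `f : Y ⟶ X` has split reduction at `R` if its generic fiber (a scheme
over the function field `κ(ξ)`) does. -/
def MorHasSplitReductionAt {Y : Scheme} (f : Y ⟶ X) (ξ : X)
    (R : Subring (X.residueField ξ)) : Prop :=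
  HasSplitReductionAt R (fiberAt f ξ) (fiberStruct f ξ)

end DVR

/-- A morphism of schemes is flat if all the induced maps on stalks are flat. -/
def FlatMorphism {X Y : Scheme} (f : X ⟶ Y) : Prop :=
  ∀ x : X,
    letI : Algebra (Y.presheaf.stalk (f.base x)) (X.presheaf.stalk x) :=
      (f.stalkMap x).hom.toAlgebra
    Module.Flat (Y.presheaf.stalk (f.base x)) (X.presheaf.stalk x)

/-- A morphism `f : X ⟶ Y` is projective if it factors as a closed immersion into
`ℙⁿ_Y = ℙⁿ_ℤ ×_ℤ Y` for some `n`, followed by the projection. -/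
def ProjectiveMorphism {X Y : Scheme} (f : X ⟶ Y) : Prop :=
  ∃ (n : ℕ) (g : X ⟶ ProjSpace ℤ n),
    IsClosedImmersion
      (pullback.lift g f
        (specZIsTerminal.hom_ext (g ≫ specZIsTerminal.from (ProjSpace ℤ n))
          (f ≫ specZIsTerminal.from Y)) :
        X ⟶ pullback (specZIsTerminal.from (ProjSpace ℤ n)) (specZIsTerminal.from Y))

/-- `C ⊆ X` is an exceptional curve (a `(-1)`-curve): an irreducible closed curve which
can be contracted to a closed point by a proper morphism to a smooth scheme which is an
isomorphism away from that point (Castelnuovo's criterion). -/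
def IsExceptionalCurve (F : Type) [Field F] (Xb : Scheme) (pXb : Xb ⟶ SpecF F)
    (C : Set Xb) : Prop :=
  IsClosed C ∧ IsIrreducible C ∧
  ∃ (Y : Scheme) (g : Xb ⟶ Y) (pY : Y ⟶ SpecF F) (y : Y) (hy : IsClosed ({y} : Set Y)),
    IsSmooth pY ∧ IsProper g ∧ g ≫ pY = pXb ∧
    C = g.base ⁻¹' {y} ∧
    IsIso (g ∣_ ⟨{y}ᶜ, hy.isOpen_compl⟩)

/-- A point of `X ×_k k̄` is an `n`-Eckardt point if it lies on at least `n` distinct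
exceptional curves of `X ×_k k̄`. -/
def IsEckardtPoint (k : Type) [Field k] (X : Scheme) (p : X ⟶ SpecF k) (n : ℕ)
    (P : geomModel k X p) : Prop :=
  ∃ Cs : Finset (Set (geomModel k X p)), n ≤ Cs.card ∧
    ∀ C ∈ Cs, IsExceptionalCurve (AlgebraicClosure k) (geomModel k X p)
      (geomModelStruct k X p) C ∧ P ∈ C

/-- `ν : X̃ ⟶ X` is the blowup of the smooth surface `X` at the closed point `x₀`:
a proper morphism from a smooth `k`-scheme which is an isomorphism away from `x₀`
and whose fiber over `x₀` is `ℙ¹` over `κ(x₀)`. -/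
def IsBlowupAtPoint (k : Type) [Field k] {Xt X : Scheme} (pX : X ⟶ SpecF k)
    (ν : Xt ⟶ X) (x₀ : X) : Prop :=
  IsProper ν ∧ IsSmooth (ν ≫ pX) ∧
  (∃ hcl : IsClosed ({x₀} : Set X), IsIso (ν ∣_ ⟨{x₀}ᶜ, hcl.isOpen_compl⟩)) ∧
  ∃ e : fiberAt ν x₀ ≅ P1 (X.residueField x₀),
    e.hom ≫ ProjSpace.structMor (X.residueField x₀) 1 = fiberStruct ν x₀

/-- A finite field extension of `F`, bundled. -/
structure FiniteExtensionOf (F : Type) [Field F] where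
  carrier : Type
  [field : Field carrier]
  [alg : Algebra F carrier]
  [finite : Module.Finite F carrier]

attribute [instance] FiniteExtensionOf.field FiniteExtensionOf.alg FiniteExtensionOf.finite

/-- Del Pezzo surfaces of degree `1`, `2` or `4`, via their standard models:
degree 1: a smooth sextic hypersurface in `ℙ(1,1,2,3)`;
degree 2: a smooth quartic hypersurface in `ℙ(1,1,1,2)`;
degree 4: a smooth intersection of two quadrics in `ℙ⁴`. -/
def IsDelPezzoOfDegree (k : Type) [Field k] (X : Scheme) (pX : X ⟶ SpecF k) : ℕ → Prop
  | 1 => IsSmoothProjSurfaceOver k X pX ∧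
      ∃ q : MvPolynomial (Fin 4) k,
        q ∈ MvPolynomial.weightedHomogeneousSubmodule k ![1, 1, 2, 3] 6 ∧ q ≠ 0 ∧
        IsProjQuotientOver k ![1, 1, 2, 3] (Ideal.span {q}) X pX
  | 2 => IsSmoothProjSurfaceOver k X pX ∧
      ∃ q : MvPolynomial (Fin 4) k,
        q ∈ MvPolynomial.weightedHomogeneousSubmodule k ![1, 1, 1, 2] 4 ∧ q ≠ 0 ∧
        IsProjQuotientOver k ![1, 1, 1, 2] (Ideal.span {q}) X pX
  | 4 => IsSmoothProjSurfaceOver k X pX ∧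
      ∃ q₁ q₂ : MvPolynomial (Fin 5) k,
        q₁.IsHomogeneous 2 ∧ q₂.IsHomogeneous 2 ∧ LinearIndependent k ![q₁, q₂] ∧
        IsProjQuotientOver k (fun _ => 1) (Ideal.span {q₁, q₂}) X pX
  | _ => False

section AuxLemmas

/-- Geometric integrality descends along base change by a field extension:
if `X'` is the pullback of `X/F` along `Spec F' ⟶ Spec F`, then geometric integrality
of `X` over `F` gives geometric integrality of `X'` over `F'`. -/
lemma geometricallyIntegral_of_isPullback {F F' : Type} [Field F] [Field F'] (i : F →+* F')
    {X X' : Scheme} {p : X ⟶ SpecF F} {p' : X' ⟶ SpecF F'} {g : X' ⟶ X}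
    (hpb : IsPullback g p' p (Spec.map (CommRingCat.ofHom i)))
    (h : GeometricallyIntegral F X p) :
    GeometricallyIntegral F' X' p' := by
  intro F'' instF'' j
  have sq1 : IsPullback (pullback.fst p' (Spec.map (CommRingCat.ofHom j)))
      (pullback.snd p' (Spec.map (CommRingCat.ofHom j))) p' (Spec.map (CommRingCat.ofHom j)) :=
    IsPullback.of_hasPullback _ _
  have sq2 := sq1.paste_horiz hpb
  have hcomp : Spec.map (CommRingCat.ofHom j) ≫ Spec.map (CommRingCat.ofHom i)
      = Spec.map (CommRingCat.ofHom (j.comp i)) := by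
    rw [← Spec.map_comp]
    rfl
  rw [hcomp] at sq2
  have hint : IsIntegral (pullback p (Spec.map (CommRingCat.ofHom (j.comp i)))) :=
    h F'' instF'' (j.comp i)
  have e := sq2.isoPullback
  have hne := Nonempty.intro (e.inv.base hint.nonempty.some)
  exact @isIntegral_of_isOpenImmersion _ _ e.hom inferInstance hint hne

/-- Splitness is preserved by base change along a field extension. -/
lemma splitOver_of_isPullback {F F' : Type} [Field F] [Field F'] (i : F →+* F')
    {X X' : Scheme} {p : X ⟶ SpecF F} {p' : X' ⟶ SpecF F'} {g : X' ⟶ X}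
    (hpb : IsPullback g p' p (Spec.map (CommRingCat.ofHom i)))
    (h : SplitOver F X p) : SplitOver F' X' p' := by
  obtain ⟨V, hne, hGI⟩ := h
  have hs : AlgebraicGeometry.Surjective (Spec.map (CommRingCat.ofHom i)) := by
    constructor
    intro x
    refine ⟨(inferInstance : Nonempty (PrimeSpectrum F')).some, ?_⟩
    exact (inferInstance : Subsingleton (PrimeSpectrum F)).elim _ _
  have hg : AlgebraicGeometry.Surjective g := MorphismProperty.of_isPullback hpb.flip hs
  refine ⟨g ⁻¹ᵁ V, ?_, ?_⟩
  · obtain ⟨x, hx⟩ := hne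
    obtain ⟨y, hy⟩ := hg.surj x
    exact ⟨y, show g.base y ∈ (V : Set X) from hy ▸ hx⟩
  · exact geometricallyIntegral_of_isPullback i
      ((isPullback_morphismRestrict g V).paste_vert hpb) hGI

end AuxLemmas

/-- Lemma 5.2.
Given a Cartesian square of `k`-varieties with `φ : U ⟶ U'` smooth, a subset `S ⊆ U'`
and finite extensions `L_u/κ(u)` for `u ∈ S` such that:
(i) the fibers of `φ` at points `u ∉ S` are split;
(ii) for `u ∈ S` the fiber `φ⁻¹(u) ×_{κ(u)} L_u` is a split `L_u`-scheme;
(iii) for every `w ∈ W'` with `f(w) ∈ S` there is an embedding of `κ(f(w))`-extensions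
`L_{f(w)} ↪ κ(w)`;
then the projection `W ⟶ W'` is smooth with split fibers. -/
theorem smooth_split_fibers_of_cartesian_square
    (k : Type) [Field k] [CharZero k]
    (U U' W W' : Scheme)
    (pU : U ⟶ SpecF k) (pU' : U' ⟶ SpecF k) (pW : W ⟶ SpecF k) (pW' : W' ⟶ SpecF k)
    (hU : IsVarietyOver k U pU) (hU' : IsVarietyOver k U' pU')
    (hW : IsVarietyOver k W pW) (hW' : IsVarietyOver k W' pW')
    (φ : U ⟶ U') (hφk : φ ≫ pU' = pU) (hφ : IsSmooth φ)
    (f : W' ⟶ U') (hfk : f ≫ pU' = pW')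
    (a : W ⟶ U) (b : W ⟶ W') (hb : b ≫ pW' = pW)
    (hsq : IsPullback a b φ f)
    (S : Set U')
    (L : ∀ u : U', u ∈ S → FiniteExtensionOf (U'.residueField u))
    (h1 : ∀ u : U', u ∉ S →
      SplitOver (U'.residueField u) (fiberAt φ u) (fiberStruct φ u))
    (h2 : ∀ (u : U') (hu : u ∈ S),
      SplitOver (L u hu).carrier
        (pullback (fiberStruct φ u)
          (Spec.map (CommRingCat.ofHom (algebraMap (U'.residueField u) (L u hu).carrier))))
        (pullback.snd _ _))
    (h3 : ∀ (w : W') (hw : f.base w ∈ S),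
      ∃ e : (L (f.base w) hw).carrier →+* W'.residueField w,
        e.comp (algebraMap (U'.residueField (f.base w)) (L (f.base w) hw).carrier) =
          (f.residueFieldMap w).hom) :
    IsSmooth b ∧ ∀ w : W',
      SplitOver (W'.residueField w) (fiberAt b w) (fiberStruct b w) := by
  have hbs : IsSmooth b := by
    have := isSmooth_isStableUnderBaseChange
    exact MorphismProperty.of_isPullback (P := @Smooth) hsq hφ
  refine ⟨hbs, fun w => ?_⟩
  have sq1 : IsPullback (pullback.fst b (W'.fromSpecResidueField w))
      (pullback.snd b (W'.fromSpecResidueField w)) b (W'.fromSpecResidueField w) :=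
    IsPullback.of_hasPullback _ _
  have sq2 := sq1.paste_horiz hsq
  rw [show W'.fromSpecResidueField w ≫ f
      = Spec.map (f.residueFieldMap w) ≫ U'.fromSpecResidueField (f.base w) from
    (Scheme.Hom.SpecMap_residueFieldMap_fromSpecResidueField f w).symm] at sq2
  have hcomm : (pullback.fst b (W'.fromSpecResidueField w) ≫ a) ≫ φ
      = (pullback.snd b (W'.fromSpecResidueField w) ≫ Spec.map (f.residueFieldMap w))
        ≫ U'.fromSpecResidueField (f.base w) := by
    rw [Category.assoc]
    exact sq2.w
  set t : fiberAt b w ⟶ fiberAt φ (f.base w) :=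
    pullback.lift (pullback.fst b (W'.fromSpecResidueField w) ≫ a)
      (pullback.snd b (W'.fromSpecResidueField w) ≫ Spec.map (f.residueFieldMap w))
      hcomm with ht
  have sq3 : IsPullback t (fiberStruct b w) (fiberStruct φ (f.base w))
      (Spec.map (f.residueFieldMap w)) := by
    refine IsPullback.of_right ?_ (pullback.lift_snd _ _ _)
      (IsPullback.of_hasPullback φ (U'.fromSpecResidueField (f.base w)))
    rw [ht]
    erw [pullback.lift_fst]
    exact sq2
  by_cases hS : f.base w ∈ S
  · obtain ⟨e, he⟩ := h3 w hS
    have hr : Spec.map (f.residueFieldMap w)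
        = Spec.map (CommRingCat.ofHom e) ≫
          Spec.map (CommRingCat.ofHom
            (algebraMap (U'.residueField (f.base w)) (L (f.base w) hS).carrier)) := by
      rw [← Spec.map_comp]
      exact congrArg Spec.map (congrArg CommRingCat.ofHom he).symm
    rw [hr] at sq3
    have hcomm2 : t ≫ fiberStruct φ (f.base w)
        = (fiberStruct b w ≫ Spec.map (CommRingCat.ofHom e)) ≫
          Spec.map (CommRingCat.ofHom
            (algebraMap (U'.residueField (f.base w)) (L (f.base w) hS).carrier)) := by
      rw [Category.assoc]
      exact sq3.w
    have sq4 : IsPullback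
        (pullback.lift t (fiberStruct b w ≫ Spec.map (CommRingCat.ofHom e)) hcomm2)
        (fiberStruct b w)
        (pullback.snd (fiberStruct φ (f.base w))
          (Spec.map (CommRingCat.ofHom
            (algebraMap (U'.residueField (f.base w)) (L (f.base w) hS).carrier))))
        (Spec.map (CommRingCat.ofHom e)) := by
      refine IsPullback.of_right ?_ (pullback.lift_snd _ _ _) (IsPullback.of_hasPullback _ _)
      rw [pullback.lift_fst]
      exact sq3
    exact splitOver_of_isPullback e sq4 (h2 (f.base w) hS)
  · exact splitOver_of_isPullback (f.residueFieldMap w).hom sq3 (h1 (f.base w) hS)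

end Paper
end
end

section
/- Let k be a field and X a k-scheme. If X contains a pseudo-split k-subscheme, then for each element γ of the absolute Galois group Gal(k̄/k) there exists a field extension F/k such that the algebraic closure of k in F is isomorphic, as a k-extension, to the fixed field k̄^⟨γ⟩, and X(F) ≠ ∅. -/
/-!
Common definitions used to formalize the paper
"Weak weak approximation for del Pezzo surfaces of low degree" (arXiv:2111.11409).
-/

open AlgebraicGeometry CategoryTheory CategoryTheory.Limits TopologicalSpace

noncomputable section

namespace Paper

attribute [local instance] MvPolynomial.gradedAlgebra

section Statement17Aux

lemma toStalk_stalkCongr_hom (R : CommRingCat) (p q : PrimeSpectrum R) (h : p = q) :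
    StructureSheaf.toStalk R p ≫ ((Spec R).presheaf.stalkCongr (.of_eq h)).hom =
      StructureSheaf.toStalk R q := by
  subst h
  simp [TopCat.Presheaf.stalkCongr]
  erw [TopCat.Presheaf.stalkSpecializes_refl]
  exact Category.comp_id _

lemma stalkCongr_hom_eq_id {Y : Scheme} {a : Y} (h : a = a) :
    (Y.presheaf.stalkCongr (.of_eq h)).hom = 𝟙 _ := by
  simp [TopCat.Presheaf.stalkCongr]

lemma stalkCongr_hom_comp {Y : Scheme} {a b c : Y} (h1 : a = b) (h2 : b = c) :
    (Y.presheaf.stalkCongr (.of_eq h1)).hom ≫ (Y.presheaf.stalkCongr (.of_eq h2)).hom =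
    (Y.presheaf.stalkCongr (.of_eq (h1.trans h2))).hom := by
  subst h1; subst h2
  rw [stalkCongr_hom_eq_id rfl]
  simp [stalkCongr_hom_eq_id]

lemma stalkCongr_hom_comp_assoc' {Y : Scheme} {a b c : Y} (h1 : a = b) (h2 : b = c)
    {Z : CommRingCat} (k : Y.presheaf.stalk c ⟶ Z) :
    (Y.presheaf.stalkCongr (.of_eq h1)).hom ≫ (Y.presheaf.stalkCongr (.of_eq h2)).hom ≫ k =
    (Y.presheaf.stalkCongr (.of_eq (h1.trans h2))).hom ≫ k := by
  rw [← Category.assoc, stalkCongr_hom_comp h1 h2]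

lemma stalk_fix {W Y : Scheme} (f : W ⟶ W) (w : W ⟶ Y) (ξ : W)
    (hfix : f.base ξ = ξ) (hw : f ≫ w = w) :
    w.stalkMap ξ ≫ ((W.presheaf.stalkCongr (.of_eq hfix.symm)).hom ≫ f.stalkMap ξ) =
      w.stalkMap ξ := by
  refine (Scheme.Hom.stalkMap_congr_point_assoc w ξ (f.base ξ) hfix.symm (f.stalkMap ξ)).trans ?_
  refine (congrArg (_ ≫ ·) (Scheme.Hom.stalkMap_comp f w ξ).symm).trans ?_
  refine (congrArg (_ ≫ ·) (Scheme.Hom.stalkMap_congr_hom (f ≫ w) w hw ξ)).trans ?_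
  have h1 : w.base ξ = w.base (f.base ξ) := by rw [hfix]
  have h2 : w.base (f.base ξ) = w.base ξ := by rw [hfix]
  refine (stalkCongr_hom_comp_assoc' (b := w.base (f.base ξ)) h1 h2 _).trans ?_
  rw [stalkCongr_hom_eq_id (h1.trans h2), Category.id_comp]

lemma toStalk_specMap {R S : CommRingCat} (φ : R ⟶ S) (p : PrimeSpectrum S) :
    StructureSheaf.toStalk R ((Spec.map φ).base p) ≫ (Spec.map φ).stalkMap p =
      φ ≫ StructureSheaf.toStalk S p := AlgebraicGeometry.stalkMap_toStalk φ p

lemma stalk_twist {W : Scheme} {R : CommRingCat} (f : W ⟶ W) (w : W ⟶ Spec R) (g : R ⟶ R)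
    (ξ : W) (hfix : f.base ξ = ξ) (hw : f ≫ w = w ≫ Spec.map g) :
    (StructureSheaf.toStalk R (w.base ξ) ≫ w.stalkMap ξ) ≫
        ((W.presheaf.stalkCongr (.of_eq hfix.symm)).hom ≫ f.stalkMap ξ) =
      g ≫ StructureSheaf.toStalk R (w.base ξ) ≫ w.stalkMap ξ := by
  refine (Category.assoc _ _ _).trans ?_
  refine (congrArg (_ ≫ ·)
    (Scheme.Hom.stalkMap_congr_point_assoc w ξ (f.base ξ) hfix.symm (f.stalkMap ξ))).trans ?_
  refine (congrArg (fun t => _ ≫ _ ≫ t) (Scheme.Hom.stalkMap_comp f w ξ).symm).trans ?_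
  refine (congrArg (fun t => _ ≫ _ ≫ t)
    (Scheme.Hom.stalkMap_congr_hom (f ≫ w) (w ≫ Spec.map g) hw ξ)).trans ?_
  have hq : w.base (f.base ξ) = (Spec.map g).base (w.base ξ) := by
    simpa using congrArg (fun h => h.base ξ) hw
  have h1 : w.base ξ = w.base (f.base ξ) := by rw [hfix]
  refine (congrArg (_ ≫ ·) (stalkCongr_hom_comp_assoc' (b := w.base (f.base ξ)) h1 hq _)).trans ?_
  refine (congrArg (fun t => _ ≫ _ ≫ t) (Scheme.Hom.stalkMap_comp w (Spec.map g) ξ)).trans ?_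
  refine (Category.assoc _ _ _).symm.trans ?_
  refine (congrArg (· ≫ _) (toStalk_stalkCongr_hom R (w.base ξ) ((Spec.map g).base (w.base ξ)) (h1.trans hq))).trans ?_
  refine (Category.assoc _ _ _).symm.trans ?_
  refine (congrArg (· ≫ w.stalkMap ξ) (toStalk_specMap g (w.base ξ))).trans ?_
  exact Category.assoc _ _ _

lemma toStalk_stalkMap_congr_mor {W : Scheme} {R : CommRingCat} (w w' : W ⟶ Spec R)
    (hww' : w = w') (ξ : W) :
    StructureSheaf.toStalk R (w.base ξ) ≫ w.stalkMap ξ =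
      StructureSheaf.toStalk R (w'.base ξ) ≫ w'.stalkMap ξ := by subst hww'; rfl

lemma toStalk_comp_specMap {W : Scheme} {R S : CommRingCat} (w : W ⟶ Spec S) (φ : R ⟶ S)
    (ξ : W) :
    StructureSheaf.toStalk R ((w ≫ Spec.map φ).base ξ) ≫ (w ≫ Spec.map φ).stalkMap ξ =
      φ ≫ StructureSheaf.toStalk S (w.base ξ) ≫ w.stalkMap ξ := by
  refine (congrArg (_ ≫ ·) (Scheme.Hom.stalkMap_comp w (Spec.map φ) ξ)).trans ?_
  refine (Category.assoc _ _ _).symm.trans ?_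
  refine (congrArg (· ≫ w.stalkMap ξ) (toStalk_specMap φ (w.base ξ))).trans ?_
  exact Category.assoc _ _ _

lemma toStalk_stalkMap_comp_decomp {W X' : Scheme} {R : CommRingCat} (g : W ⟶ X')
    (p : X' ⟶ Spec R) (ξ : W) :
    StructureSheaf.toStalk R ((g ≫ p).base ξ) ≫ (g ≫ p).stalkMap ξ =
      StructureSheaf.toStalk R (p.base (g.base ξ)) ≫ p.stalkMap (g.base ξ) ≫ g.stalkMap ξ :=
  congrArg (_ ≫ ·) (Scheme.Hom.stalkMap_comp g p ξ)

end Statement17Aux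

/-- Lemma 6.7.
Let `X` be a `k`-scheme containing a pseudo-split `k`-subscheme.  Then for each `γ` in
the absolute Galois group `Gal(k̄/k)` there is a field extension `F/k` whose algebraic
closure of `k` inside `F` is isomorphic, as a `k`-extension, to the fixed field
`k̄^⟨γ⟩`, and such that `X(F) ≠ ∅`. -/
theorem point_in_fixed_field_extension_of_pseudoSplit
    (k : Type) [Field k]
    (X : Scheme) (pX : X ⟶ SpecF k)
    (hX : ContainsPseudoSplitSub k X pX) :
    ∀ γ : AlgebraicClosure k ≃ₐ[k] AlgebraicClosure k,
      ∃ (F : Type) (_ : Field F) (_ : Algebra k F),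
        Nonempty ((integralClosure k F) ≃ₐ[k]
          (IntermediateField.fixedField (Subgroup.zpowers γ))) ∧
        ∃ x : SpecF F ⟶ X, x ≫ pX = Spec.map (CommRingCat.ofHom (algebraMap k F)) := by
  intro γ
  classical
  obtain ⟨Z, ι, hι, hps⟩ := hX
  obtain ⟨T, ⟨hTcomp, ξ, hξT, hfield⟩, hTfix⟩ := hps γ
  obtain ⟨f, hfdef⟩ : ∃ f' : geomModel k Z (ι ≫ pX) ⟶ geomModel k Z (ι ≫ pX),
      f' = galAut k Z (ι ≫ pX) γ := ⟨_, rfl⟩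
  rw [← hfdef] at hTfix
  have hξmem : ξ ∈ T := by rw [← hξT]; exact subset_closure rfl
  have hTclosed : IsClosed T := isClosed_of_mem_irreducibleComponents _ hTcomp
  have hfix : f.base ξ = ξ := by
    have h1 : IsGenericPoint (f.base ξ) T := by
      refine subset_antisymm ?_ ?_
      · exact hTclosed.closure_subset_iff.mpr (Set.singleton_subset_iff.mpr
          (by rw [← hTfix]; exact ⟨ξ, hξmem, rfl⟩))
      · calc T = f.base '' T := hTfix.symm
          _ = f.base '' closure {ξ} := by rw [hξT]
          _ ⊆ closure (f.base '' {ξ}) := image_closure_subset_closure_image f.base.hom.continuous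
          _ = closure {f.base ξ} := by rw [Set.image_singleton]
    exact h1.eq hξT
  -- morphisms out of the geometric model
  obtain ⟨prZ, hprZdef⟩ : ∃ w : geomModel k Z (ι ≫ pX) ⟶ Z,
      w = geomModelProj k Z (ι ≫ pX) := ⟨_, rfl⟩
  obtain ⟨st, hstdef⟩ : ∃ w : geomModel k Z (ι ≫ pX) ⟶ SpecF (AlgebraicClosure k),
      w = geomModelStruct k Z (ι ≫ pX) := ⟨_, rfl⟩
  obtain ⟨g, hgdef⟩ : ∃ w : geomModel k Z (ι ≫ pX) ⟶ X, w = prZ ≫ ι := ⟨_, rfl⟩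
  obtain ⟨q, hqdef⟩ : ∃ w : geomModel k Z (ι ≫ pX) ⟶ SpecF k, w = g ≫ pX := ⟨_, rfl⟩
  have hf1 : f ≫ prZ = prZ := by
    rw [hfdef, hprZdef]; simp [galAut, geomModelProj]
    exact (pullback.lift_fst _ _ _).trans (Category.comp_id _)
  have hf2 : f ≫ st = st ≫ Spec.map (CommRingCat.ofHom γ.toRingHom) := by
    rw [hfdef, hstdef]; simp [galAut, geomModelStruct]
    exact pullback.lift_snd _ _ _
  have hfg : f ≫ g = g := by rw [hgdef, ← Category.assoc, hf1]
  have hfq : f ≫ q = q := by rw [hqdef, ← Category.assoc, hfg]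
  have hqst : q = st ≫ Spec.map (CommRingCat.ofHom (algebraMap k (AlgebraicClosure k))) := by
    rw [hqdef, hgdef, hprZdef, hstdef, Category.assoc]
    exact (pullback.condition (f := ι ≫ pX) (g := algClosureMor k))
  -- the Galois action on the stalk at ξ, and the relevant ring maps into it
  letI : Field ((geomModel k Z (ι ≫ pX)).presheaf.stalk ξ) := hfield.toField
  obtain ⟨σ, hσdef⟩ : ∃ σ' : (geomModel k Z (ι ≫ pX)).presheaf.stalk ξ ⟶
      (geomModel k Z (ι ≫ pX)).presheaf.stalk ξ,
      σ' = ((geomModel k Z (ι ≫ pX)).presheaf.stalkCongr (.of_eq hfix.symm)).hom ≫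
        f.stalkMap ξ := ⟨_, rfl⟩
  obtain ⟨j, hjdef⟩ : ∃ j' : CommRingCat.of (AlgebraicClosure k) ⟶
      (geomModel k Z (ι ≫ pX)).presheaf.stalk ξ,
      j' = StructureSheaf.toStalk (AlgebraicClosure k) (st.base ξ) ≫ st.stalkMap ξ :=
    ⟨_, rfl⟩
  have hjσ : j ≫ σ = CommRingCat.ofHom γ.toRingHom ≫ j := by
    rw [hjdef, hσdef, ← Category.assoc]
    exact stalk_twist f st (CommRingCat.ofHom γ.toRingHom) ξ hfix hf2
  obtain ⟨φ0, hφ0def⟩ : ∃ w : CommRingCat.of k ⟶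
      (geomModel k Z (ι ≫ pX)).presheaf.stalk ξ,
      w = StructureSheaf.toStalk k (q.base ξ) ≫ q.stalkMap ξ := ⟨_, rfl⟩
  have hφ0σ : φ0 ≫ σ = φ0 := by
    rw [hφ0def, hσdef]; refine (Category.assoc _ _ _).trans ?_
    exact congrArg (_ ≫ ·) (stalk_fix f q ξ hfix hfq)
  have hρσ : g.stalkMap ξ ≫ σ = g.stalkMap ξ := by
    rw [hσdef]; exact stalk_fix f g ξ hfix hfg
  have hcompat : φ0 = CommRingCat.ofHom (algebraMap k (AlgebraicClosure k)) ≫ j := by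
    rw [hφ0def, hjdef]
    exact (toStalk_stalkMap_congr_mor q _ hqst ξ).trans
      (toStalk_comp_specMap st (CommRingCat.ofHom (algebraMap k (AlgebraicClosure k))) ξ)
  have hφ0X : φ0 = StructureSheaf.toStalk k (pX.base (g.base ξ)) ≫
      pX.stalkMap (g.base ξ) ≫ g.stalkMap ξ := by
    rw [hφ0def]
    exact (toStalk_stalkMap_congr_mor q (g ≫ pX) hqdef ξ).trans
      (toStalk_stalkMap_comp_decomp g pX ξ)
  -- elementwise versions
  have hjσ' : ∀ a : AlgebraicClosure k, σ (j a) = j (γ a) := fun a => by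
    simpa using ConcreteCategory.congr_hom hjσ a
  have hφ0σ' : ∀ c : k, σ (φ0 c) = φ0 c := fun c => by
    simpa using ConcreteCategory.congr_hom hφ0σ c
  have hρσ' : ∀ a, σ (g.stalkMap ξ a) = g.stalkMap ξ a := fun a => by
    simpa using ConcreteCategory.congr_hom hρσ a
  have hcompat' : ∀ c : k, φ0 c = j (algebraMap k (AlgebraicClosure k) c) := fun c => by
    simpa using ConcreteCategory.congr_hom hcompat c
  -- the fixed subfield of the stalk
  let σR : ((geomModel k Z (ι ≫ pX)).presheaf.stalk ξ : Type) →+*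
      ((geomModel k Z (ι ≫ pX)).presheaf.stalk ξ : Type) := σ.hom
  let Fsub : Subfield ((geomModel k Z (ι ≫ pX)).presheaf.stalk ξ) :=
    { RingHom.eqLocus σR (RingHom.id _) with
      inv_mem' := fun a (ha : σR a = a) => by
        show σR a⁻¹ = a⁻¹
        rw [map_inv₀]
        exact congrArg Inv.inv ha }
  have hmemφ : ∀ c : k, φ0 c ∈ Fsub := fun c => hφ0σ' c
  let φR : k →+* ↥Fsub := RingHom.codRestrict φ0.hom Fsub hmemφ
  have hmemρ : ∀ a, g.stalkMap ξ a ∈ Fsub := fun a => hρσ' a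
  let ρFR : (X.presheaf.stalk (g.base ξ) : Type) →+* ↥Fsub :=
    RingHom.codRestrict (g.stalkMap ξ).hom
      Fsub hmemρ
  letI algkF : Algebra k ↥Fsub := φR.toAlgebra
  refine ⟨↥Fsub, inferInstance, algkF, ?_, ?_⟩
  · -- the algebraic closure of k in the fixed subfield is the fixed field of γ
    letI : Algebra k ((geomModel k Z (ι ≫ pX)).presheaf.stalk ξ : Type) :=
      φ0.hom.toAlgebra
    letI : Algebra (AlgebraicClosure k) ((geomModel k Z (ι ≫ pX)).presheaf.stalk ξ : Type) :=
      j.hom.toAlgebra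
    letI : Algebra ↥Fsub ((geomModel k Z (ι ≫ pX)).presheaf.stalk ξ : Type) :=
      Fsub.subtype.toAlgebra
    haveI ht1 : IsScalarTower k (AlgebraicClosure k)
        ((geomModel k Z (ι ≫ pX)).presheaf.stalk ξ : Type) :=
      IsScalarTower.of_algebraMap_eq fun c => hcompat' c
    haveI ht2 : IsScalarTower k ↥Fsub
        ((geomModel k Z (ι ≫ pX)).presheaf.stalk ξ : Type) :=
      IsScalarTower.of_algebraMap_eq fun c => rfl
    have hjinj : Function.Injective j.hom :=
      RingHom.injective _
    have hmemj : ∀ b : AlgebraicClosure k, γ b = b → j b ∈ Fsub := fun b hb => by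
      show σ (j b) = j b
      rw [hjσ' b, hb]
    have hfixelem : ∀ b : ↥(IntermediateField.fixedField (Subgroup.zpowers γ)),
        γ (b : AlgebraicClosure k) = b := fun b => b.2 ⟨γ, Subgroup.mem_zpowers γ⟩
    let Ψfull : ↥(IntermediateField.fixedField (Subgroup.zpowers γ)) →+* ↥Fsub :=
      RingHom.codRestrict (j.hom.comp
        (algebraMap ↥(IntermediateField.fixedField (Subgroup.zpowers γ)) (AlgebraicClosure k)))
        Fsub (fun b => hmemj _ (hfixelem b))
    have hΨval : ∀ b, ((Ψfull b : ↥Fsub) :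
        ((geomModel k Z (ι ≫ pX)).presheaf.stalk ξ : Type)) = j (b : AlgebraicClosure k) :=
      fun b => rfl
    have hint : ∀ b, IsIntegral k (Ψfull b) := by
      intro b
      have hbint : IsIntegral k (b : AlgebraicClosure k) :=
        (Algebra.IsAlgebraic.isAlgebraic (b : AlgebraicClosure k)).isIntegral
      obtain ⟨p, hmon, hroot⟩ := hbint
      refine ⟨p, hmon, ?_⟩
      apply Subtype.val_injective
      have h1 : (Fsub.subtype) (Polynomial.eval₂ (algebraMap k ↥Fsub) (Ψfull b) p) =
          Polynomial.eval₂ (Fsub.subtype.comp (algebraMap k ↥Fsub))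
            ((Ψfull b : ↥Fsub) : ((geomModel k Z (ι ≫ pX)).presheaf.stalk ξ : Type)) p :=
        Polynomial.hom_eval₂ _ _ _ _
      have h2 : Fsub.subtype.comp (algebraMap k ↥Fsub) =
          (j.hom.comp
            (algebraMap k (AlgebraicClosure k))) := RingHom.ext fun c => hcompat' c
      show (Fsub.subtype) (Polynomial.eval₂ (algebraMap k ↥Fsub) (Ψfull b) p) = _
      rw [h1, h2, hΨval, ← Polynomial.hom_eval₂, hroot, map_zero]
      rfl
    let Ψ0 : ↥(IntermediateField.fixedField (Subgroup.zpowers γ)) →+*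
        ↥(integralClosure k ↥Fsub) :=
      RingHom.codRestrict Ψfull (integralClosure k ↥Fsub) (fun b => hint b)
    let Ψ : ↥(IntermediateField.fixedField (Subgroup.zpowers γ)) →ₐ[k]
        ↥(integralClosure k ↥Fsub) :=
      { toRingHom := Ψ0,
        commutes' := fun c => by
          apply Subtype.ext; apply Subtype.ext
          show j ((algebraMap k (IntermediateField.fixedField (Subgroup.zpowers γ)) c :
            AlgebraicClosure k)) = _
          exact (hcompat' c).symm }
    have hinjΨ : Function.Injective Ψ := by
      intro a b hab
      apply Subtype.ext
      apply hjinj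
      exact congrArg (fun t : ↥(integralClosure k ↥Fsub) => ((t : ↥Fsub) :
        ((geomModel k Z (ι ≫ pX)).presheaf.stalk ξ : Type))) hab
    have hsurjΨ : Function.Surjective Ψ := by
      rintro ⟨a, ha⟩
      have ha' : IsIntegral k a := ha
      have hmap : IsIntegral k (algebraMap ↥Fsub
          ((geomModel k Z (ι ≫ pX)).presheaf.stalk ξ : Type) a) :=
        ha'.map (@IsScalarTower.toAlgHom k ↥Fsub _ _ _ _ _ _ _ ht2)
      have htop : IsIntegral (AlgebraicClosure k) (algebraMap ↥Fsub
          ((geomModel k Z (ι ≫ pX)).presheaf.stalk ξ : Type) a) := hmap.tower_top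
      have hirr := minpoly.irreducible htop
      have hdeg := IsAlgClosed.degree_eq_one_of_irreducible (AlgebraicClosure k) hirr
      have hmon := minpoly.monic htop
      have hnd : (minpoly (AlgebraicClosure k) (algebraMap ↥Fsub
          ((geomModel k Z (ι ≫ pX)).presheaf.stalk ξ : Type) a)).natDegree = 1 :=
        Polynomial.natDegree_eq_of_degree_eq_some hdeg
      have hc1 : (minpoly (AlgebraicClosure k) (algebraMap ↥Fsub
          ((geomModel k Z (ι ≫ pX)).presheaf.stalk ξ : Type) a)).coeff 1 = 1 := by
        have := hmon.coeff_natDegree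
        rwa [hnd] at this
      have hp := Polynomial.eq_X_add_C_of_degree_le_one (le_of_eq hdeg)
      have haev := minpoly.aeval (AlgebraicClosure k) (algebraMap ↥Fsub
          ((geomModel k Z (ι ≫ pX)).presheaf.stalk ξ : Type) a)
      rw [hp] at haev
      rw [hc1] at haev
      simp only [map_one, one_mul, Polynomial.aeval_add, Polynomial.aeval_X,
        Polynomial.aeval_C] at haev
      have hb : j (-(minpoly (AlgebraicClosure k) (algebraMap ↥Fsub
          ((geomModel k Z (ι ≫ pX)).presheaf.stalk ξ : Type) a)).coeff 0) =
          algebraMap ↥Fsub ((geomModel k Z (ι ≫ pX)).presheaf.stalk ξ : Type) a := by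
        rw [map_neg]
        rw [eq_comm, ← add_eq_zero_iff_eq_neg]
        exact haev
      have hγb : γ (-(minpoly (AlgebraicClosure k) (algebraMap ↥Fsub
          ((geomModel k Z (ι ≫ pX)).presheaf.stalk ξ : Type) a)).coeff 0) =
          -(minpoly (AlgebraicClosure k) (algebraMap ↥Fsub
          ((geomModel k Z (ι ≫ pX)).presheaf.stalk ξ : Type) a)).coeff 0 := by
        apply hjinj
        show j (γ (-(minpoly (AlgebraicClosure k) (algebraMap ↥Fsub
          ((geomModel k Z (ι ≫ pX)).presheaf.stalk ξ : Type) a)).coeff 0)) =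
          j (-(minpoly (AlgebraicClosure k) (algebraMap ↥Fsub
          ((geomModel k Z (ι ≫ pX)).presheaf.stalk ξ : Type) a)).coeff 0)
        rw [← hjσ' _, hb]
        exact a.2
      have hbL : (-(minpoly (AlgebraicClosure k) (algebraMap ↥Fsub
          ((geomModel k Z (ι ≫ pX)).presheaf.stalk ξ : Type) a)).coeff 0) ∈
          IntermediateField.fixedField (Subgroup.zpowers γ) := by
        have hst : Subgroup.zpowers γ ≤ MulAction.stabilizer
            (AlgebraicClosure k ≃ₐ[k] AlgebraicClosure k)
            (-(minpoly (AlgebraicClosure k) (algebraMap ↥Fsub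
              ((geomModel k Z (ι ≫ pX)).presheaf.stalk ξ : Type) a)).coeff 0) :=
          Subgroup.zpowers_le.mpr hγb
        exact fun gg => hst gg.2
      refine ⟨⟨_, hbL⟩, ?_⟩
      apply Subtype.ext; apply Subtype.ext
      exact hb
    exact ⟨(AlgEquiv.ofBijective Ψ ⟨hinjΨ, hsurjΨ⟩).symm⟩
  · -- the rational point
    refine ⟨Spec.map (CommRingCat.ofHom ρFR : X.presheaf.stalk (g.base ξ) ⟶ CommRingCat.of ↥Fsub) ≫
      X.fromSpecStalk (g.base ξ), ?_⟩
    refine (Category.assoc _ _ _).trans ?_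
    refine (congrArg (_ ≫ ·)
      (Scheme.SpecMap_stalkMap_fromSpecStalk (f := pX) (x := g.base ξ)).symm).trans ?_
    refine (congrArg (fun t => _ ≫ _ ≫ t) (Scheme.Spec_fromSpecStalk' _ _)).trans ?_
    refine (congrArg (_ ≫ ·) (Spec.map_comp _ _).symm).trans ?_
    refine (Spec.map_comp _ _).symm.trans ?_
    congr 1
    have hval : ∀ c : k, φ0 c =
        g.stalkMap ξ (pX.stalkMap (g.base ξ) (StructureSheaf.toStalk k (pX.base (g.base ξ)) c)) :=
      fun c => ConcreteCategory.congr_hom hφ0X c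
    apply CommRingCat.hom_ext
    refine RingHom.ext fun c => Subtype.ext ?_
    exact (hval c).symm

end Paper
end
end
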